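/- arXiv:1105.5427 — 7 statements merged into one kernel-verified Lean document; each statement's English description precedes it below -/
import Mathlib

section
/- Suppose β₁ > 0, β₂ > 0, x̄ ∈ X, ȳ ∈ ℝ^m, and the excessive gap condition f(x̄; β₂) ≤ d(ȳ; β₁) holds. Then for any maximizer y* of the dual function d over ℝ^m one has −‖y*‖·‖A x̄ − b‖ ≤ φ(x̄) − d(ȳ) ≤ β₁(D₁ + D₂) − ‖A x̄ − b‖²/(2β₂) ≤ β₁(D₁ + D₂). -/
open scoped RealInnerProductSpace

theorem stmt_3 {m n₁ n₂ : ℕ} (hm : 0 < m) (hn₁ : 0 < n₁) (hn₂ : 0 < n₂)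
    (X1 : Set (EuclideanSpace ℝ (Fin n₁))) (X2 : Set (EuclideanSpace ℝ (Fin n₂)))
    (hX1ne : X1.Nonempty) (hX1cp : IsCompact X1) (hX1cv : Convex ℝ X1)
    (hX2ne : X2.Nonempty) (hX2cp : IsCompact X2) (hX2cv : Convex ℝ X2)
    (φ₁ : EuclideanSpace ℝ (Fin n₁) → ℝ) (φ₂ : EuclideanSpace ℝ (Fin n₂) → ℝ)
    (hφ₁c : Continuous φ₁) (hφ₁cv : ConvexOn ℝ Set.univ φ₁)
    (hφ₂c : Continuous φ₂) (hφ₂cv : ConvexOn ℝ Set.univ φ₂)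
    (A₁ : EuclideanSpace ℝ (Fin n₁) →L[ℝ] EuclideanSpace ℝ (Fin m))
    (A₂ : EuclideanSpace ℝ (Fin n₂) →L[ℝ] EuclideanSpace ℝ (Fin m))
    (b : EuclideanSpace ℝ (Fin m))
    (p₁ : EuclideanSpace ℝ (Fin n₁) → ℝ) (p₂ : EuclideanSpace ℝ (Fin n₂) → ℝ)
    (hp₁c : Continuous p₁) (hp₂c : Continuous p₂)
    (D₁ D₂ : ℝ)
    (hp₁b : ∀ x ∈ X1, 0 ≤ p₁ x ∧ p₁ x ≤ D₁)
    (hp₂b : ∀ x ∈ X2, 0 ≤ p₂ x ∧ p₂ x ≤ D₂)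
    (β₁ β₂ : ℝ) (hβ₁ : 0 < β₁) (hβ₂ : 0 < β₂)
    (d dβ : EuclideanSpace ℝ (Fin m) → ℝ)
    (hd : ∀ y, IsLeast
      ((fun x : EuclideanSpace ℝ (Fin n₁) × EuclideanSpace ℝ (Fin n₂) =>
        φ₁ x.1 + φ₂ x.2 + ⟪A₁ x.1 + A₂ x.2 - b, y⟫) '' (X1 ×ˢ X2)) (d y))
    (hdβ : ∀ y, IsLeast
      ((fun x : EuclideanSpace ℝ (Fin n₁) × EuclideanSpace ℝ (Fin n₂) =>
        φ₁ x.1 + φ₂ x.2 + ⟪A₁ x.1 + A₂ x.2 - b, y⟫ + β₁ * (p₁ x.1 + p₂ x.2)) '' (X1 ×ˢ X2))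
      (dβ y))
    (xb : EuclideanSpace ℝ (Fin n₁) × EuclideanSpace ℝ (Fin n₂))
    (hxb : xb ∈ X1 ×ˢ X2)
    (yb : EuclideanSpace ℝ (Fin m))
    (hgap : φ₁ xb.1 + φ₂ xb.2 + ‖A₁ xb.1 + A₂ xb.2 - b‖ ^ 2 / (2 * β₂) ≤ dβ yb)
    (ys : EuclideanSpace ℝ (Fin m)) (hys : ∀ y, d y ≤ d ys) :
    -(‖ys‖ * ‖A₁ xb.1 + A₂ xb.2 - b‖) ≤ φ₁ xb.1 + φ₂ xb.2 - d yb ∧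
    φ₁ xb.1 + φ₂ xb.2 - d yb ≤ β₁ * (D₁ + D₂) - ‖A₁ xb.1 + A₂ xb.2 - b‖ ^ 2 / (2 * β₂) ∧
    β₁ * (D₁ + D₂) - ‖A₁ xb.1 + A₂ xb.2 - b‖ ^ 2 / (2 * β₂) ≤ β₁ * (D₁ + D₂) := by
  obtain ⟨⟨x0, hx0, hval⟩, hlb⟩ := hd yb
  have h1 : dβ yb ≤ φ₁ x0.1 + φ₂ x0.2 + ⟪A₁ x0.1 + A₂ x0.2 - b, yb⟫ + β₁ * (p₁ x0.1 + p₂ x0.2) :=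
    (hdβ yb).2 ⟨x0, hx0, rfl⟩
  have hp1 := hp₁b x0.1 hx0.1
  have hp2 := hp₂b x0.2 hx0.2
  have h2 : β₁ * (p₁ x0.1 + p₂ x0.2) ≤ β₁ * (D₁ + D₂) :=
    mul_le_mul_of_nonneg_left (add_le_add hp1.2 hp2.2) hβ₁.le
  have hdyb : dβ yb ≤ d yb + β₁ * (D₁ + D₂) := by
    rw [← hval]; dsimp only; linarith
  have hupper : φ₁ xb.1 + φ₂ xb.2 - d yb ≤
      β₁ * (D₁ + D₂) - ‖A₁ xb.1 + A₂ xb.2 - b‖ ^ 2 / (2 * β₂) := by linarith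
  have h3 : d ys ≤ φ₁ xb.1 + φ₂ xb.2 + ⟪A₁ xb.1 + A₂ xb.2 - b, ys⟫ :=
    (hd ys).2 ⟨xb, hxb, rfl⟩
  have h4 : d yb ≤ d ys := hys yb
  have h5 : ⟪A₁ xb.1 + A₂ xb.2 - b, ys⟫ ≤ ‖ys‖ * ‖A₁ xb.1 + A₂ xb.2 - b‖ := by
    calc ⟪A₁ xb.1 + A₂ xb.2 - b, ys⟫ ≤ ‖A₁ xb.1 + A₂ xb.2 - b‖ * ‖ys‖ := real_inner_le_norm _ _
    _ = _ := mul_comm _ _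
  have hsq : 0 ≤ ‖A₁ xb.1 + A₂ xb.2 - b‖ ^ 2 / (2 * β₂) :=
    div_nonneg (sq_nonneg _) (by linarith)
  exact ⟨by linarith, hupper, by linarith⟩
end

section
/- Suppose β₁ > 0, β₂ > 0, x̄ ∈ X, ȳ ∈ ℝ^m, the excessive gap condition f(x̄; β₂) ≤ d(ȳ; β₁) holds, and y* is a maximizer of the dual function d over ℝ^m. Then the feasibility gap satisfies ‖A x̄ − b‖ ≤ β₂·[‖y*‖ + √(‖y*‖² + (2β₁/β₂)(D₁ + D₂))]. -/
open scoped RealInnerProductSpace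

theorem stmt_4 {m n₁ n₂ : ℕ} (hm : 0 < m) (hn₁ : 0 < n₁) (hn₂ : 0 < n₂)
    (X1 : Set (EuclideanSpace ℝ (Fin n₁))) (X2 : Set (EuclideanSpace ℝ (Fin n₂)))
    (hX1ne : X1.Nonempty) (hX1cp : IsCompact X1) (hX1cv : Convex ℝ X1)
    (hX2ne : X2.Nonempty) (hX2cp : IsCompact X2) (hX2cv : Convex ℝ X2)
    (φ₁ : EuclideanSpace ℝ (Fin n₁) → ℝ) (φ₂ : EuclideanSpace ℝ (Fin n₂) → ℝ)
    (hφ₁c : Continuous φ₁) (hφ₁cv : ConvexOn ℝ Set.univ φ₁)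
    (hφ₂c : Continuous φ₂) (hφ₂cv : ConvexOn ℝ Set.univ φ₂)
    (A₁ : EuclideanSpace ℝ (Fin n₁) →L[ℝ] EuclideanSpace ℝ (Fin m))
    (A₂ : EuclideanSpace ℝ (Fin n₂) →L[ℝ] EuclideanSpace ℝ (Fin m))
    (b : EuclideanSpace ℝ (Fin m))
    (p₁ : EuclideanSpace ℝ (Fin n₁) → ℝ) (p₂ : EuclideanSpace ℝ (Fin n₂) → ℝ)
    (hp₁c : Continuous p₁) (hp₂c : Continuous p₂)
    (D₁ D₂ : ℝ)
    (hp₁b : ∀ x ∈ X1, 0 ≤ p₁ x ∧ p₁ x ≤ D₁)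
    (hp₂b : ∀ x ∈ X2, 0 ≤ p₂ x ∧ p₂ x ≤ D₂)
    (β₁ β₂ : ℝ) (hβ₁ : 0 < β₁) (hβ₂ : 0 < β₂)
    (d dβ : EuclideanSpace ℝ (Fin m) → ℝ)
    (hd : ∀ y, IsLeast
      ((fun x : EuclideanSpace ℝ (Fin n₁) × EuclideanSpace ℝ (Fin n₂) =>
        φ₁ x.1 + φ₂ x.2 + ⟪A₁ x.1 + A₂ x.2 - b, y⟫) '' (X1 ×ˢ X2)) (d y))
    (hdβ : ∀ y, IsLeast
      ((fun x : EuclideanSpace ℝ (Fin n₁) × EuclideanSpace ℝ (Fin n₂) =>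
        φ₁ x.1 + φ₂ x.2 + ⟪A₁ x.1 + A₂ x.2 - b, y⟫ + β₁ * (p₁ x.1 + p₂ x.2)) '' (X1 ×ˢ X2))
      (dβ y))
    (xb : EuclideanSpace ℝ (Fin n₁) × EuclideanSpace ℝ (Fin n₂))
    (hxb : xb ∈ X1 ×ˢ X2)
    (yb : EuclideanSpace ℝ (Fin m))
    (hgap : φ₁ xb.1 + φ₂ xb.2 + ‖A₁ xb.1 + A₂ xb.2 - b‖ ^ 2 / (2 * β₂) ≤ dβ yb)
    (ys : EuclideanSpace ℝ (Fin m)) (hys : ∀ y, d y ≤ d ys) :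
    ‖A₁ xb.1 + A₂ xb.2 - b‖ ≤
      β₂ * (‖ys‖ + Real.sqrt (‖ys‖ ^ 2 + 2 * β₁ / β₂ * (D₁ + D₂))) := by

  set r := ‖A₁ xb.1 + A₂ xb.2 - b‖ with hr
  have hr0 : 0 ≤ r := norm_nonneg _
  have hD : 0 ≤ D₁ + D₂ := by
    obtain ⟨x₁, hx₁⟩ := hX1ne
    obtain ⟨x₂, hx₂⟩ := hX2ne
    have h1 := hp₁b x₁ hx₁
    have h2 := hp₂b x₂ hx₂
    linarith [h1.1, h1.2, h2.1, h2.2]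
  -- dβ yb ≤ d yb + β₁ (D₁ + D₂)
  obtain ⟨xs, hxs, hxsval⟩ := (hd yb).1
  have hstep1 : dβ yb ≤ d yb + β₁ * (D₁ + D₂) := by
    have h1 := (hdβ yb).2 ⟨xs, hxs, rfl⟩
    have h2 := hp₁b xs.1 hxs.1
    have h3 := hp₂b xs.2 hxs.2
    dsimp only at h1 hxsval
    nlinarith [hβ₁.le]
  -- d ys ≤ value at xb
  have hstep2 : d ys ≤ φ₁ xb.1 + φ₂ xb.2 + ⟪A₁ xb.1 + A₂ xb.2 - b, ys⟫ :=
    (hd ys).2 ⟨xb, hxb, rfl⟩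
  have hinner : ⟪A₁ xb.1 + A₂ xb.2 - b, ys⟫ ≤ r * ‖ys‖ := real_inner_le_norm _ _
  have hkey : r ^ 2 / (2 * β₂) ≤ r * ‖ys‖ + β₁ * (D₁ + D₂) := by
    have := hys yb
    linarith
  have hquad : r ^ 2 ≤ 2 * β₂ * (r * ‖ys‖) + 2 * β₂ * β₁ * (D₁ + D₂) := by
    have h := mul_le_mul_of_nonneg_left hkey (by positivity : (0:ℝ) ≤ 2 * β₂)
    rw [mul_div_cancel₀] at h
    · linarith
    · positivity
  have hsq : (r - β₂ * ‖ys‖) ^ 2 ≤ β₂ ^ 2 * (‖ys‖ ^ 2 + 2 * β₁ / β₂ * (D₁ + D₂)) := by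
    have : β₂ ^ 2 * (2 * β₁ / β₂ * (D₁ + D₂)) = 2 * β₂ * β₁ * (D₁ + D₂) := by
      field_simp
    nlinarith
  have hsqrt : r - β₂ * ‖ys‖ ≤ β₂ * Real.sqrt (‖ys‖ ^ 2 + 2 * β₁ / β₂ * (D₁ + D₂)) := by
    have h1 : r - β₂ * ‖ys‖ ≤ Real.sqrt (β₂ ^ 2 * (‖ys‖ ^ 2 + 2 * β₁ / β₂ * (D₁ + D₂))) := by
      calc r - β₂ * ‖ys‖ ≤ |r - β₂ * ‖ys‖| := le_abs_self _
        _ = Real.sqrt ((r - β₂ * ‖ys‖) ^ 2) := (Real.sqrt_sq_eq_abs _).symm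
        _ ≤ _ := Real.sqrt_le_sqrt hsq
    rwa [Real.sqrt_mul (sq_nonneg _), Real.sqrt_sq hβ₂.le] at h1
  linarith [hsqrt, mul_nonneg hβ₂.le (norm_nonneg ys)]
end

section
/- Let β₁ > 0 and β₂ > 0 satisfy β₁β₂ ≥ 2·max{‖A₁‖²/σ₁, ‖A₂‖²/σ₂}. Let x^c = (x^c₁, x^c₂) ∈ X be the prox-center, i.e., for i = 1, 2 the point x^cᵢ minimizes pᵢ over Xᵢ and pᵢ(x^cᵢ) = 0. Define ȳ := (A x^c − b)/β₂ and let x̄ = (x̄₁, x̄₂) ∈ X be such that for i = 1, 2 the point x̄ᵢ minimizes over Xᵢ the function xᵢ ↦ φᵢ(xᵢ) + ⟨ȳ, Aᵢ(xᵢ − x^cᵢ)⟩ + (‖Aᵢ‖²/β₂)·‖xᵢ − x^cᵢ‖². Then the excessive gap condition f(x̄; β₂) ≤ d(ȳ; β₁) holds. -/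
open scoped RealInnerProductSpace

lemma aux_growth {E : Type*} [NormedAddCommGroup E] [InnerProductSpace ℝ E]
    {X : Set E} {p : E → ℝ} {σ : ℝ} (hσ : 0 < σ)
    (h : ConvexOn ℝ X (fun x => p x - σ / 2 * ‖x‖ ^ 2))
    {c x : E} (hc : c ∈ X) (hx : x ∈ X) (hmin : ∀ z ∈ X, p c ≤ p z) :
    p c + σ / 2 * ‖x - c‖ ^ 2 ≤ p x := by
  apply le_of_forall_pos_le_add
  intro ε hε
  set q : ℝ := ‖x - c‖ ^ 2 with hq
  have hq0 : 0 ≤ q := sq_nonneg _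
  set t : ℝ := min (1/2) (ε / (σ * q + 1)) with htdef
  have hden : 0 < σ * q + 1 := by positivity
  have ht0 : 0 < t := lt_min (by norm_num) (by positivity)
  have ht1 : t ≤ 1/2 := min_le_left _ _
  have htb : t * (σ * q + 1) ≤ ε := by
    have := min_le_right (1/2) (ε / (σ * q + 1))
    calc t * (σ * q + 1) ≤ (ε / (σ * q + 1)) * (σ * q + 1) := by
          exact mul_le_mul_of_nonneg_right this hden.le
      _ = ε := by field_simp
  have hz := h.2 hc hx (by linarith : (0:ℝ) ≤ 1 - t) ht0.le (by ring)
  have hzmem : (1 - t) • c + t • x ∈ X := h.1 hc hx (by linarith) ht0.le (by ring)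
  have hpz := hmin _ hzmem
  have hnorm : (1 - t) * ‖c‖ ^ 2 + t * ‖x‖ ^ 2 - ‖(1 - t) • c + t • x‖ ^ 2
      = t * (1 - t) * q := by
    have e1 : ∀ v : E, ‖v‖ ^ 2 = ⟪v, v⟫ := fun v => (real_inner_self_eq_norm_sq v).symm
    simp only [hq, e1, inner_add_left, inner_add_right, inner_sub_left, inner_sub_right,
      real_inner_smul_left, real_inner_smul_right, real_inner_comm x c]
    ring
  simp only [smul_eq_mul] at hz
  have key : t * p c ≤ t * (p x - σ / 2 * (1 - t) * q) := by nlinarith [hz, hpz, hnorm]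
  have key2 : p c ≤ p x - σ / 2 * (1 - t) * q := le_of_mul_le_mul_left (by linarith) ht0
  nlinarith [key2, htb, mul_nonneg ht0.le hq0, mul_nonneg ht0.le (mul_nonneg hσ.le hq0)]


set_option maxHeartbeats 2000000 in
theorem stmt_5 {m n₁ n₂ : ℕ} (hm : 0 < m) (hn₁ : 0 < n₁) (hn₂ : 0 < n₂)
    (X1 : Set (EuclideanSpace ℝ (Fin n₁))) (X2 : Set (EuclideanSpace ℝ (Fin n₂)))
    (hX1ne : X1.Nonempty) (hX1cp : IsCompact X1) (hX1cv : Convex ℝ X1)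
    (hX2ne : X2.Nonempty) (hX2cp : IsCompact X2) (hX2cv : Convex ℝ X2)
    (φ₁ : EuclideanSpace ℝ (Fin n₁) → ℝ) (φ₂ : EuclideanSpace ℝ (Fin n₂) → ℝ)
    (hφ₁c : Continuous φ₁) (hφ₁cv : ConvexOn ℝ Set.univ φ₁)
    (hφ₂c : Continuous φ₂) (hφ₂cv : ConvexOn ℝ Set.univ φ₂)
    (A₁ : EuclideanSpace ℝ (Fin n₁) →L[ℝ] EuclideanSpace ℝ (Fin m))
    (A₂ : EuclideanSpace ℝ (Fin n₂) →L[ℝ] EuclideanSpace ℝ (Fin m))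
    (b : EuclideanSpace ℝ (Fin m))
    (p₁ : EuclideanSpace ℝ (Fin n₁) → ℝ) (p₂ : EuclideanSpace ℝ (Fin n₂) → ℝ)
    (hp₁c : Continuous p₁) (hp₂c : Continuous p₂)
    (σ₁ σ₂ : ℝ) (hσ₁ : 0 < σ₁) (hσ₂ : 0 < σ₂)
    (hp₁sc : ConvexOn ℝ X1 (fun x => p₁ x - σ₁ / 2 * ‖x‖ ^ 2))
    (hp₂sc : ConvexOn ℝ X2 (fun x => p₂ x - σ₂ / 2 * ‖x‖ ^ 2))
    (hp₁nn : ∀ x ∈ X1, 0 ≤ p₁ x) (hp₂nn : ∀ x ∈ X2, 0 ≤ p₂ x)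
    (β₁ β₂ : ℝ) (hβ₁ : 0 < β₁) (hβ₂ : 0 < β₂)
    (hββ : β₁ * β₂ ≥ 2 * max (‖A₁‖ ^ 2 / σ₁) (‖A₂‖ ^ 2 / σ₂))
    (xc : EuclideanSpace ℝ (Fin n₁) × EuclideanSpace ℝ (Fin n₂))
    (hxc : xc ∈ X1 ×ˢ X2)
    (hxc1 : ∀ z ∈ X1, p₁ xc.1 ≤ p₁ z) (hxc2 : ∀ z ∈ X2, p₂ xc.2 ≤ p₂ z)
    (hxc10 : p₁ xc.1 = 0) (hxc20 : p₂ xc.2 = 0)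
    (yb : EuclideanSpace ℝ (Fin m))
    (hyb : yb = β₂⁻¹ • (A₁ xc.1 + A₂ xc.2 - b))
    (xb : EuclideanSpace ℝ (Fin n₁) × EuclideanSpace ℝ (Fin n₂))
    (hxb : xb ∈ X1 ×ˢ X2)
    (hxb1 : ∀ z ∈ X1,
      φ₁ xb.1 + ⟪yb, A₁ (xb.1 - xc.1)⟫ + ‖A₁‖ ^ 2 / β₂ * ‖xb.1 - xc.1‖ ^ 2 ≤
      φ₁ z + ⟪yb, A₁ (z - xc.1)⟫ + ‖A₁‖ ^ 2 / β₂ * ‖z - xc.1‖ ^ 2)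
    (hxb2 : ∀ z ∈ X2,
      φ₂ xb.2 + ⟪yb, A₂ (xb.2 - xc.2)⟫ + ‖A₂‖ ^ 2 / β₂ * ‖xb.2 - xc.2‖ ^ 2 ≤
      φ₂ z + ⟪yb, A₂ (z - xc.2)⟫ + ‖A₂‖ ^ 2 / β₂ * ‖z - xc.2‖ ^ 2)
    (dβ : EuclideanSpace ℝ (Fin m) → ℝ)
    (hdβ : ∀ y, IsLeast
      ((fun x : EuclideanSpace ℝ (Fin n₁) × EuclideanSpace ℝ (Fin n₂) =>
        φ₁ x.1 + φ₂ x.2 + ⟪A₁ x.1 + A₂ x.2 - b, y⟫ + β₁ * (p₁ x.1 + p₂ x.2)) '' (X1 ×ˢ X2))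
      (dβ y)) :
    φ₁ xb.1 + φ₂ xb.2 + ‖A₁ xb.1 + A₂ xb.2 - b‖ ^ 2 / (2 * β₂) ≤ dβ yb := by

  obtain ⟨hmem, hlb⟩ := hdβ yb
  obtain ⟨xs, hxs, hxseq⟩ := hmem
  dsimp only at hxseq
  have hxs1 : xs.1 ∈ X1 := hxs.1
  have hxs2 : xs.2 ∈ X2 := hxs.2
  have hβ₂0 : β₂ ≠ 0 := ne_of_gt hβ₂
  set r1 := xb.1 - xc.1 with hr1
  set r2 := xb.2 - xc.2 with hr2
  set q1 := xs.1 - xc.1 with hq1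
  set q2 := xs.2 - xc.2 with hq2
  have hAc : A₁ xc.1 + A₂ xc.2 - b = β₂ • yb := by
    rw [hyb, smul_inv_smul₀ hβ₂0]
  have hg1 : σ₁ / 2 * ‖q1‖ ^ 2 ≤ p₁ xs.1 := by
    have := aux_growth hσ₁ hp₁sc hxc.1 hxs1 hxc1
    rw [hxc10] at this; linarith
  have hg2 : σ₂ / 2 * ‖q2‖ ^ 2 ≤ p₂ xs.2 := by
    have := aux_growth hσ₂ hp₂sc hxc.2 hxs2 hxc2
    rw [hxc20] at this; linarith
  have hA1sq : ‖A₁‖ ^ 2 ≤ β₁ * β₂ / 2 * σ₁ := by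
    have h1 : ‖A₁‖ ^ 2 / σ₁ ≤ β₁ * β₂ / 2 := by
      have := le_max_left (‖A₁‖ ^ 2 / σ₁) (‖A₂‖ ^ 2 / σ₂)
      linarith [hββ]
    exact (div_le_iff₀ hσ₁).mp h1
  have hA2sq : ‖A₂‖ ^ 2 ≤ β₁ * β₂ / 2 * σ₂ := by
    have h1 : ‖A₂‖ ^ 2 / σ₂ ≤ β₁ * β₂ / 2 := by
      have := le_max_right (‖A₁‖ ^ 2 / σ₁) (‖A₂‖ ^ 2 / σ₂)
      linarith [hββ]
    exact (div_le_iff₀ hσ₂).mp h1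
  have hb1 : ‖A₁‖ ^ 2 / β₂ ≤ β₁ * (σ₁ / 2) := by
    rw [div_le_iff₀ hβ₂]; nlinarith
  have hb2 : ‖A₂‖ ^ 2 / β₂ ≤ β₁ * (σ₂ / 2) := by
    rw [div_le_iff₀ hβ₂]; nlinarith
  have hP1 : ‖A₁‖ ^ 2 / β₂ * ‖q1‖ ^ 2 ≤ β₁ * p₁ xs.1 := by
    calc ‖A₁‖ ^ 2 / β₂ * ‖q1‖ ^ 2 ≤ β₁ * (σ₁ / 2) * ‖q1‖ ^ 2 :=
          mul_le_mul_of_nonneg_right hb1 (sq_nonneg _)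
      _ = β₁ * (σ₁ / 2 * ‖q1‖ ^ 2) := by ring
      _ ≤ β₁ * p₁ xs.1 := mul_le_mul_of_nonneg_left hg1 hβ₁.le
  have hP2 : ‖A₂‖ ^ 2 / β₂ * ‖q2‖ ^ 2 ≤ β₁ * p₂ xs.2 := by
    calc ‖A₂‖ ^ 2 / β₂ * ‖q2‖ ^ 2 ≤ β₁ * (σ₂ / 2) * ‖q2‖ ^ 2 :=
          mul_le_mul_of_nonneg_right hb2 (sq_nonneg _)
      _ = β₁ * (σ₂ / 2 * ‖q2‖ ^ 2) := by ring
      _ ≤ β₁ * p₂ xs.2 := mul_le_mul_of_nonneg_left hg2 hβ₁.le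
  have hE1 : ⟪A₁ xs.1 + A₂ xs.2 - b, yb⟫ =
      β₂ * ‖yb‖ ^ 2 + ⟪yb, A₁ q1⟫ + ⟪yb, A₂ q2⟫ := by
    have hrw : A₁ xs.1 + A₂ xs.2 - b = β₂ • yb + (A₁ q1 + A₂ q2) := by
      rw [← hAc, hq1, hq2, map_sub, map_sub]; abel
    rw [hrw, inner_add_left, inner_add_left, real_inner_smul_left,
      real_inner_self_eq_norm_sq, real_inner_comm (A₁ q1), real_inner_comm (A₂ q2)]
    ring
  have hE2 : ‖A₁ xb.1 + A₂ xb.2 - b‖ ^ 2 =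
      β₂ ^ 2 * ‖yb‖ ^ 2 + 2 * β₂ * (⟪yb, A₁ r1⟫ + ⟪yb, A₂ r2⟫) + ‖A₁ r1 + A₂ r2‖ ^ 2 := by
    have hrw : A₁ xb.1 + A₂ xb.2 - b = β₂ • yb + (A₁ r1 + A₂ r2) := by
      rw [← hAc, hr1, hr2, map_sub, map_sub]; abel
    rw [hrw, norm_add_sq_real, norm_smul, Real.norm_eq_abs, abs_of_pos hβ₂,
      real_inner_smul_left, inner_add_right]
    ring
  have hu : ‖A₁ r1 + A₂ r2‖ ^ 2 ≤ 2 * (‖A₁‖ ^ 2 * ‖r1‖ ^ 2 + ‖A₂‖ ^ 2 * ‖r2‖ ^ 2) := by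
    have h1 := norm_add_le (A₁ r1) (A₂ r2)
    have h2 := A₁.le_opNorm r1
    have h3 := A₂.le_opNorm r2
    have hS : ‖A₁ r1 + A₂ r2‖ ≤ ‖A₁‖ * ‖r1‖ + ‖A₂‖ * ‖r2‖ :=
      le_trans h1 (add_le_add h2 h3)
    have hsq : ‖A₁ r1 + A₂ r2‖ ^ 2 ≤ (‖A₁‖ * ‖r1‖ + ‖A₂‖ * ‖r2‖) ^ 2 :=
      pow_le_pow_left₀ (norm_nonneg _) hS 2
    nlinarith [hsq, sq_nonneg (‖A₁‖ * ‖r1‖ - ‖A₂‖ * ‖r2‖)]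
  have hx1 := hxb1 xs.1 hxs1
  have hx2 := hxb2 xs.2 hxs2
  have hfrac : ‖A₁ xb.1 + A₂ xb.2 - b‖ ^ 2 / (2 * β₂) =
      β₂ * ‖yb‖ ^ 2 / 2 + (⟪yb, A₁ r1⟫ + ⟪yb, A₂ r2⟫) + ‖A₁ r1 + A₂ r2‖ ^ 2 / (2 * β₂) := by
    rw [hE2]; field_simp
  have hufrac : ‖A₁ r1 + A₂ r2‖ ^ 2 / (2 * β₂) ≤
      ‖A₁‖ ^ 2 / β₂ * ‖r1‖ ^ 2 + ‖A₂‖ ^ 2 / β₂ * ‖r2‖ ^ 2 := by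
    rw [div_le_iff₀ (by positivity : (0:ℝ) < 2 * β₂)]
    have heq : (‖A₁‖ ^ 2 / β₂ * ‖r1‖ ^ 2 + ‖A₂‖ ^ 2 / β₂ * ‖r2‖ ^ 2) * (2 * β₂) =
        2 * (‖A₁‖ ^ 2 * ‖r1‖ ^ 2 + ‖A₂‖ ^ 2 * ‖r2‖ ^ 2) := by
      field_simp
    rw [heq]; exact hu
  have hy0 : 0 ≤ β₂ * ‖yb‖ ^ 2 / 2 := by positivity
  rw [← hxseq]
  linarith [hP1, hP2, hx1, hx2, hfrac, hufrac, hy0, hE1]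
end

section
/- Let τ ∈ (0, 1), let τ⁺ be a real number with 0 < τ⁺ ≤ τ/(τ + 1), and let L̄ ≥ 0. If β₁ > 0 and β₂ > 0 satisfy β₁β₂ ≥ (τ²/(1 − τ)²)·L̄, then the updated parameters β₁⁺ := (1 − τ)β₁ and β₂⁺ := (1 − τ)β₂ satisfy β₁⁺β₂⁺ ≥ ((τ⁺)²/(1 − τ⁺)²)·L̄; moreover 0 < τ⁺ < 1/2. -/
theorem stmt_9 (τ : ℝ) (hτ : τ ∈ Set.Ioo (0 : ℝ) 1)
    (τp : ℝ) (hτp : 0 < τp) (hτp' : τp ≤ τ / (τ + 1))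
    (L : ℝ) (hL : 0 ≤ L)
    (β₁ β₂ : ℝ) (hβ₁ : 0 < β₁) (hβ₂ : 0 < β₂)
    (h : β₁ * β₂ ≥ τ ^ 2 / (1 - τ) ^ 2 * L) :
    (1 - τ) * β₁ * ((1 - τ) * β₂) ≥ τp ^ 2 / (1 - τp) ^ 2 * L ∧ 0 < τp ∧ τp < 1 / 2 := by
  obtain ⟨hτ0, hτ1⟩ := hτ
  have hτ1' : (0:ℝ) < τ + 1 := by linarith
  have h1τ : (0:ℝ) < 1 - τ := by linarith
  have hhalf : τp < 1 / 2 := by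
    refine lt_of_le_of_lt hτp' ?_
    rw [div_lt_div_iff₀ hτ1' (by norm_num)]
    nlinarith
  have h1τp : (0:ℝ) < 1 - τp := by linarith
  -- τp ≤ τ (1 - τp)
  have key : τp ≤ τ * (1 - τp) := by
    have h2 : τp * (τ + 1) ≤ τ := by
      have := mul_le_mul_of_nonneg_right hτp' (le_of_lt hτ1')
      rwa [div_mul_cancel₀ _ (ne_of_gt hτ1')] at this
    nlinarith
  -- τp^2/(1-τp)^2 ≤ τ^2
  have key2 : τp ^ 2 / (1 - τp) ^ 2 ≤ τ ^ 2 := by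
    rw [div_le_iff₀ (by positivity)]
    nlinarith [sq_nonneg (τ * (1 - τp) - τp)]
  refine ⟨?_, hτp, hhalf⟩
  have hb : β₁ * β₂ * (1 - τ) ^ 2 ≥ τ ^ 2 * L := by
    have h' := h
    rw [ge_iff_le, div_mul_eq_mul_div, div_le_iff₀ (by positivity)] at h'
    linarith
  have : τp ^ 2 / (1 - τp) ^ 2 * L ≤ τ ^ 2 * L :=
    mul_le_mul_of_nonneg_right key2 hL
  nlinarith
end

section
/- Let τ₀ ∈ (0, 1) and define recursively τ_{k+1} := (τ_k/2)·(√(τ_k² + 4) − τ_k). Then for every integer k ≥ 1, the strict bounds τ₀/(1 + 2τ₀k) < τ_k < 2τ₀/(2 + τ₀k) hold. -/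
theorem stmt_14 (τ₀ : ℝ) (hτ₀ : τ₀ ∈ Set.Ioo (0 : ℝ) 1)
    (τ : ℕ → ℝ) (hτ0 : τ 0 = τ₀)
    (hτrec : ∀ k : ℕ, τ (k + 1) = τ k / 2 * (Real.sqrt ((τ k) ^ 2 + 4) - τ k)) :
    ∀ k : ℕ, 1 ≤ k → τ₀ / (1 + 2 * τ₀ * k) < τ k ∧ τ k < 2 * τ₀ / (2 + τ₀ * k) := by
  obtain ⟨h0, h1⟩ := hτ₀
  have hpos : ∀ k, 0 < τ k ∧ τ k < 1 := by
    intro k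
    induction k with
    | zero => rw [hτ0]; exact ⟨h0, h1⟩
    | succ n ih =>
      obtain ⟨hx0, hx1⟩ := ih
      set x := τ n with hxdef
      have hs4 : (2:ℝ) ≤ Real.sqrt (x ^ 2 + 4) := by
        rw [show (2:ℝ) = Real.sqrt 4 by
          rw [show (4:ℝ) = 2 ^ 2 by norm_num, Real.sqrt_sq (by norm_num : (0:ℝ) ≤ 2)]]
        exact Real.sqrt_le_sqrt (by nlinarith)
      have hdiff : 0 < Real.sqrt (x ^ 2 + 4) - x := by linarith
      have hy0 : 0 < τ (n + 1) := by
        rw [hτrec n]; exact mul_pos (by linarith) hdiff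
      have hsq : Real.sqrt (x ^ 2 + 4) ^ 2 = x ^ 2 + 4 :=
        Real.sq_sqrt (by positivity)
      have hid : τ (n + 1) ^ 2 = x ^ 2 * (1 - τ (n + 1)) := by
        rw [hτrec n]
        linear_combination (x ^ 2 / 4) * hsq
      have hy1 : τ (n + 1) < 1 := by nlinarith
      exact ⟨hy0, hy1⟩
  have hstep : ∀ k, (τ k)⁻¹ + 1 / 2 < (τ (k + 1))⁻¹ ∧ (τ (k + 1))⁻¹ < (τ k)⁻¹ + 1 := by
    intro k
    obtain ⟨hx0, hx1⟩ := hpos k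
    obtain ⟨hy0, hy1⟩ := hpos (k + 1)
    have hsq : Real.sqrt (τ k ^ 2 + 4) ^ 2 = τ k ^ 2 + 4 :=
      Real.sq_sqrt (by positivity)
    have hid : τ (k + 1) ^ 2 = τ k ^ 2 * (1 - τ (k + 1)) := by
      rw [hτrec k]
      linear_combination (τ k ^ 2 / 4) * hsq
    set a := (τ k)⁻¹
    set b := (τ (k + 1))⁻¹
    have ha1 : 1 < a := (one_lt_inv₀ hx0).mpr hx1
    have hb1 : 1 < b := (one_lt_inv₀ hy0).mpr hy1
    have hrel : b ^ 2 = a ^ 2 + b := by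
      have hxne : τ k ≠ 0 := ne_of_gt hx0
      have hyne : τ (k + 1) ≠ 0 := ne_of_gt hy0
      simp only [a, b]
      field_simp
      nlinarith [hid, sq_nonneg (τ k), sq_nonneg (τ (k+1))]
    constructor
    · nlinarith [sq_nonneg (b - a), sq_nonneg (b + a)]
    · nlinarith [sq_nonneg (b - a - 1), sq_nonneg (b - a)]
  have hbound : ∀ k : ℕ, τ₀⁻¹ + (k + 1) / 2 < (τ (k + 1))⁻¹ ∧ (τ (k + 1))⁻¹ < τ₀⁻¹ + (k + 1) := by
    intro k
    induction k with
    | zero =>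
      have := hstep 0
      rw [hτ0] at this
      push_cast
      constructor <;> linarith [this.1, this.2]
    | succ n ih =>
      have h2 := hstep (n + 1)
      push_cast at ih ⊢
      constructor <;> linarith [h2.1, h2.2, ih.1, ih.2]
  intro k hk
  obtain ⟨j, rfl⟩ : ∃ j, k = j + 1 := ⟨k - 1, by omega⟩
  obtain ⟨hlb, hub⟩ := hbound j
  obtain ⟨hx0, hx1⟩ := hpos (j + 1)
  have hkpos : (1:ℝ) ≤ (j + 1 : ℕ) := by exact_mod_cast hk
  have hcast : ((j + 1 : ℕ) : ℝ) = (j : ℝ) + 1 := by push_cast; ring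
  have hτ₀inv : τ₀ * τ₀⁻¹ = 1 := mul_inv_cancel₀ (ne_of_gt h0)
  have hτkinv : τ (j + 1) * (τ (j + 1))⁻¹ = 1 := mul_inv_cancel₀ (ne_of_gt hx0)
  constructor
  · have hd : 0 < 1 + 2 * τ₀ * ((j + 1 : ℕ) : ℝ) := by positivity
    rw [div_lt_iff₀ hd, hcast]

    nlinarith [mul_lt_mul_of_pos_left hub (mul_pos hx0 h0), mul_pos hx0 h0,
      mul_pos (mul_pos hx0 h0) (by linarith [Nat.cast_nonneg (α := ℝ) j] : (0:ℝ) < (j:ℝ) + 1)]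
  · have hd : 0 < 2 + τ₀ * ((j + 1 : ℕ) : ℝ) := by positivity
    rw [lt_div_iff₀ hd, hcast]

    nlinarith [mul_lt_mul_of_pos_left hlb (mul_pos hx0 h0), mul_pos hx0 h0]
end

section
/- Let τ₀ ∈ (0, 1), τ_{k+1} := (τ_k/2)·(√(τ_k² + 4) − τ_k), and let β̄ > 0. Define β₁⁰ = β₂⁰ := β̄ and, for k ≥ 0, β₁^{k+1} := (1 − τ_k)β₁^k if k is even and β₁^{k+1} := β₁^k if k is odd, while β₂^{k+1} := β₂^k if k is even and β₂^{k+1} := (1 − τ_k)β₂^k if k is odd. Then for every integer k ≥ 1: (1 − τ₀)β̄/(2τ₀k + 1) < β₁^k < 2β̄√(1 − τ₀)/(τ₀k) and β̄√(1 − τ₀)/(2τ₀k + 1) < β₂^k < 2β̄/(τ₀k). -/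
set_option maxHeartbeats 1000000 in

theorem stmt_15 (τ₀ βb : ℝ) (hτ₀ : τ₀ ∈ Set.Ioo (0 : ℝ) 1) (hβb : 0 < βb)
    (τ : ℕ → ℝ) (hτ0 : τ 0 = τ₀)
    (hτrec : ∀ k : ℕ, τ (k + 1) = τ k / 2 * (Real.sqrt ((τ k) ^ 2 + 4) - τ k))
    (β₁ β₂ : ℕ → ℝ) (hβ₁0 : β₁ 0 = βb) (hβ₂0 : β₂ 0 = βb)
    (hβ₁rec : ∀ k : ℕ, β₁ (k + 1) = if Even k then (1 - τ k) * β₁ k else β₁ k)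
    (hβ₂rec : ∀ k : ℕ, β₂ (k + 1) = if Even k then β₂ k else (1 - τ k) * β₂ k) :
    ∀ k : ℕ, 1 ≤ k →
      ((1 - τ₀) * βb / (2 * τ₀ * k + 1) < β₁ k ∧ β₁ k < 2 * βb * Real.sqrt (1 - τ₀) / (τ₀ * k)) ∧
      (βb * Real.sqrt (1 - τ₀) / (2 * τ₀ * k + 1) < β₂ k ∧ β₂ k < 2 * βb / (τ₀ * k)) := by
  obtain ⟨hτp, hτ1⟩ := hτ₀
  have hle : ∀ x y : ℝ, 0 ≤ x → 0 ≤ y → x^2 ≤ y^2 → x ≤ y := by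
    intro x y hx hy h; nlinarith
  -- τ k ∈ (0,1)
  have h01 : ∀ k, 0 < τ k ∧ τ k < 1 := by
    intro k
    induction k with
    | zero => rw [hτ0]; exact ⟨hτp, hτ1⟩
    | succ n ih =>
      obtain ⟨hp, h1⟩ := ih
      have hs : Real.sqrt ((τ n)^2 + 4) ^ 2 = (τ n)^2 + 4 :=
        Real.sq_sqrt (by positivity)
      have hsp : 0 < Real.sqrt ((τ n)^2 + 4) := Real.sqrt_pos.mpr (by positivity)
      rw [hτrec n]
      constructor
      · have hlt : τ n < Real.sqrt ((τ n)^2 + 4) := by nlinarith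
        nlinarith
      · nlinarith [mul_pos hp hsp]
  -- key identity
  have hB : ∀ k, (τ (k+1))^2 = (τ k)^2 * (1 - τ (k+1)) := by
    intro k
    have hs : Real.sqrt ((τ k)^2 + 4) ^ 2 = (τ k)^2 + 4 :=
      Real.sq_sqrt (by positivity)
    rw [hτrec k]
    linear_combination ((τ k)^2/4) * hs
  -- monotonicity
  have hmono : ∀ k, τ (k+1) ≤ τ k := by
    intro k
    have h1 := (h01 k).1
    have h2 := (h01 (k+1)).1
    have h3 := (h01 (k+1)).2
    nlinarith [hB k]
  -- upper bound on 1/τ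
  have ht_up : ∀ k, 1 / τ k ≤ 1 / τ₀ + k := by
    intro k
    induction k with
    | zero => rw [hτ0]; simp
    | succ n ih =>
      have ha := (h01 n).1
      have hb := (h01 (n+1)).1
      set a := τ n with hadef
      set b := τ (n+1) with hbdef
      have h3 : (b + a*b - a)*(a+b) = a*b^2 := by linear_combination hB n
      have h4 : 0 < b + a*b - a := by
        nlinarith [mul_pos (mul_pos ha hb) hb, add_pos ha hb]
      have h5 : 1/b ≤ 1/a + 1 := by
        rw [div_add' _ _ _ ha.ne', div_le_div_iff₀ hb ha]
        nlinarith
      push_cast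
      linarith
  -- lower bound on 1/τ
  have ht_lo : ∀ k, 1 / τ₀ + k / 2 ≤ 1 / τ k := by
    intro k
    induction k with
    | zero => rw [hτ0]; simp
    | succ n ih =>
      have ha := (h01 n).1
      have hb := (h01 (n+1)).1
      set a := τ n with hadef
      set b := τ (n+1) with hbdef
      have hab : b ≤ a := hmono n
      have h3 : (2*a - 2*b - a*b)*(a+b) = a*b*(a-b) := by linear_combination (-2 : ℝ) * hB n
      have h4 : 0 ≤ 2*a - 2*b - a*b := by
        nlinarith [mul_nonneg (mul_nonneg ha.le hb.le) (sub_nonneg.mpr hab), add_pos ha hb]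
      have h5 : 1/a + 1/2 ≤ 1/b := by
        rw [div_add_div _ _ ha.ne' two_ne_zero, div_le_div_iff₀ (by positivity) hb]
        nlinarith
      push_cast
      linarith
  -- positivity of β₁ β₂
  have hβpos : ∀ k, 0 < β₁ k ∧ 0 < β₂ k := by
    intro k
    induction k with
    | zero => rw [hβ₁0, hβ₂0]; exact ⟨hβb, hβb⟩
    | succ n ih =>
      have h1 := (h01 n).2
      rw [hβ₁rec n, hβ₂rec n]
      by_cases h : Even n <;> simp [h] <;>
        exact ⟨by nlinarith [ih.1, ih.2], by nlinarith [ih.1, ih.2]⟩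
  -- ratio invariant
  have hJ : ∀ k, (Even k → (1 - τ₀) * β₂ k ≤ (1 - τ k) * β₁ k ∧ β₁ k ≤ β₂ k) ∧
      (¬ Even k → (1 - τ₀) * β₂ k ≤ β₁ k ∧ β₁ k ≤ (1 - τ k) * β₂ k) := by
    intro k
    induction k with
    | zero =>
      constructor
      · intro _
        rw [hβ₁0, hβ₂0, hτ0]
        exact ⟨le_refl _, le_refl _⟩
      · intro h; exact absurd Even.zero h
    | succ n ih =>
      have hb1 := (hβpos n).1
      have hb2 := (hβpos n).2
      have hτn1 := (h01 n).2
      have hm := hmono n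
      by_cases h : Even n
      · obtain ⟨e1, e2⟩ := ih.1 h
        have hodd : ¬ Even (n+1) := by simp [Nat.even_add_one, h]
        refine ⟨fun hc => absurd hc hodd, fun _ => ?_⟩
        rw [hβ₁rec n, hβ₂rec n, if_pos h, if_pos h]
        exact ⟨e1, by nlinarith⟩
      · obtain ⟨e1, e2⟩ := ih.2 h
        have heven : Even (n+1) := Nat.even_add_one.mpr h
        refine ⟨fun _ => ?_, fun hc => absurd heven hc⟩
        rw [hβ₁rec n, hβ₂rec n, if_neg h, if_neg h]
        constructor
        · nlinarith [mul_le_mul_of_nonneg_left e1 (by linarith : (0:ℝ) ≤ 1 - τ n)]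
        · exact e2
  -- for all k, (1-τ₀) β₂ ≤ β₁ ≤ β₂
  have hJ' : ∀ k, (1 - τ₀) * β₂ k ≤ β₁ k ∧ β₁ k ≤ β₂ k := by
    intro k
    have hb1 := (hβpos k).1
    have hb2 := (hβpos k).2
    have hτk := h01 k
    by_cases h : Even k
    · obtain ⟨e1, e2⟩ := (hJ k).1 h
      exact ⟨by nlinarith [hτk.1, hτk.2], e2⟩
    · obtain ⟨e1, e2⟩ := (hJ k).2 h
      exact ⟨e1, by nlinarith [hτk.1, hτk.2]⟩
  -- product identity
  have hτ0ne : τ₀ ≠ 0 := ne_of_gt hτp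
  have hprod : ∀ k, β₁ (k+1) * β₂ (k+1) = βb^2 * (1 - τ₀) * (τ k)^2 / τ₀^2 := by
    intro k
    induction k with
    | zero =>
      rw [hβ₁rec 0, hβ₂rec 0, if_pos Even.zero, if_pos Even.zero, hβ₁0, hβ₂0, hτ0]
      field_simp
    | succ n ih =>
      have hstep : β₁ (n+1+1) * β₂ (n+1+1) = (1 - τ (n+1)) * (β₁ (n+1) * β₂ (n+1)) := by
        rw [hβ₁rec (n+1), hβ₂rec (n+1)]
        by_cases h : Even (n+1) <;> simp [h] <;> ring
      rw [hstep, ih]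
      linear_combination (-(βb^2*(1-τ₀)/τ₀^2)) * hB n
  -- final
  intro k hk
  obtain ⟨m, rfl⟩ : ∃ m, k = m + 1 := ⟨k - 1, by omega⟩
  have ha := (h01 m).1
  have ha1 := (h01 m).2
  set a := τ m with hadef
  have hb1 := (hβpos (m+1)).1
  have hb2 := (hβpos (m+1)).2
  have hC := hprod m
  rw [← hadef] at hC
  obtain ⟨hr1, hr2⟩ := hJ' (m+1)
  set b1 := β₁ (m+1) with hb1def
  set b2 := β₂ (m+1) with hb2def
  have hmnn : (0:ℝ) ≤ (m:ℝ) := Nat.cast_nonneg m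
  have hτ0inv : 1 < 1/τ₀ := by rw [lt_div_iff₀ hτp]; linarith
  have hτ0c : 0 < 1 - τ₀ := by linarith
  -- a * (m+1) < 2
  have ha_up : a * ((m:ℝ)+1) < 2 := by
    have h5 := ht_lo m
    have h8 : a * (1/τ₀ + (m:ℝ)/2) ≤ 1 := by
      have := mul_le_mul_of_nonneg_left h5 ha.le
      rwa [mul_one_div, div_self ha.ne'] at this
    have h9 : a * 1 < a * (1/τ₀) := mul_lt_mul_of_pos_left hτ0inv ha
    nlinarith
  -- τ₀ < a * (2 τ₀ (m+1) + 1)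
  have ha_lo : τ₀ < a * (2*τ₀*((m:ℝ)+1) + 1) := by
    have h5 := ht_up m
    have h8 : 1 ≤ a * (1/τ₀ + (m:ℝ)) := by
      have := mul_le_mul_of_nonneg_left h5 ha.le
      rwa [mul_one_div, div_self ha.ne'] at this
    have h9 : τ₀ ≤ a * (1 + τ₀ * m) := by
      have h10 := mul_le_mul_of_nonneg_left h8 hτp.le
      calc τ₀ = τ₀ * 1 := (mul_one τ₀).symm
      _ ≤ τ₀ * (a * (1/τ₀ + (m:ℝ))) := h10
      _ = a * (1 + τ₀ * m) := by
        have hinv : τ₀ * (1/τ₀) = 1 := mul_one_div_cancel hτ0ne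
        linear_combination a * hinv
    nlinarith [mul_pos ha hτp, mul_nonneg (mul_pos ha hτp).le hmnn]
  -- sqrt facts
  set s := Real.sqrt (1 - τ₀) with hsdef
  have hs2 : s^2 = 1 - τ₀ := Real.sq_sqrt hτ0c.le
  have hsp : 0 < s := Real.sqrt_pos.mpr hτ0c
  have hK : ((m+1 : ℕ) : ℝ) = (m:ℝ) + 1 := by push_cast; ring
  rw [hK]
  have hD1 : 0 < 2*τ₀*((m:ℝ)+1) + 1 := by positivity
  have hD2 : 0 < τ₀*((m:ℝ)+1) := by positivity
  constructor
  · constructor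
    · -- lower bound β₁
      have hL1 : (1-τ₀)*βb*a/τ₀ ≤ b1 := by
        apply hle _ _ (by positivity) hb1.le
        have h1 : ((1-τ₀)*βb*a/τ₀)^2 = (1-τ₀)*(βb^2 * (1 - τ₀) * a^2 / τ₀^2) := by
          field_simp
        rw [h1, ← hC]
        nlinarith
      have h2 : (1-τ₀)*βb/(2*τ₀*((m:ℝ)+1)+1) < (1-τ₀)*βb*a/τ₀ := by
        rw [div_lt_div_iff₀ hD1 hτp]
        nlinarith [mul_lt_mul_of_pos_left ha_lo (mul_pos hτ0c hβb)]
      calc (1-τ₀)*βb/(2*τ₀*((m:ℝ)+1)+1) < (1-τ₀)*βb*a/τ₀ := h2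
      _ ≤ b1 := hL1
    · -- upper bound β₁
      have hU1 : b1 ≤ βb*s*a/τ₀ := by
        apply hle _ _ hb1.le (by positivity)
        have h1 : (βb*s*a/τ₀)^2 = βb^2 * (1 - τ₀) * a^2 / τ₀^2 := by
          field_simp
          nlinarith [hs2]
        rw [h1, ← hC]
        nlinarith
      have h2 : βb*s*a/τ₀ < 2*βb*s/(τ₀*((m:ℝ)+1)) := by
        rw [div_lt_div_iff₀ hτp hD2]
        nlinarith [mul_lt_mul_of_pos_left ha_up (mul_pos (mul_pos hβb hsp) hτp)]
      calc b1 ≤ βb*s*a/τ₀ := hU1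
      _ < 2*βb*s/(τ₀*((m:ℝ)+1)) := h2
  · constructor
    · -- lower bound β₂
      have hL2 : βb*s*a/τ₀ ≤ b2 := by
        apply hle _ _ (by positivity) hb2.le
        have h1 : (βb*s*a/τ₀)^2 = βb^2 * (1 - τ₀) * a^2 / τ₀^2 := by
          field_simp
          nlinarith [hs2]
        rw [h1, ← hC]
        nlinarith
      have h2 : βb*s/(2*τ₀*((m:ℝ)+1)+1) < βb*s*a/τ₀ := by
        rw [div_lt_div_iff₀ hD1 hτp]
        nlinarith [mul_lt_mul_of_pos_left ha_lo (mul_pos hβb hsp)]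
      calc βb*s/(2*τ₀*((m:ℝ)+1)+1) < βb*s*a/τ₀ := h2
      _ ≤ b2 := hL2
    · -- upper bound β₂
      have hU2 : b2 ≤ βb*a/τ₀ := by
        apply hle _ _ hb2.le (by positivity)
        have h1 : (1-τ₀)*b2^2 ≤ (1-τ₀)*((βb*a/τ₀)^2) := by
          have h3 : (1-τ₀)*((βb*a/τ₀)^2) = βb^2 * (1 - τ₀) * a^2 / τ₀^2 := by
            field_simp
          rw [h3, ← hC]
          nlinarith
        exact le_of_mul_le_mul_left h1 hτ0c
      have h2 : βb*a/τ₀ < 2*βb/(τ₀*((m:ℝ)+1)) := by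
        rw [div_lt_div_iff₀ hτp hD2]
        nlinarith [mul_lt_mul_of_pos_left ha_up (mul_pos hβb hτp)]
      calc b2 ≤ βb*a/τ₀ := hU2
      _ < 2*βb/(τ₀*((m:ℝ)+1)) := h2
end

section
/- (Gap estimates for the unsmoothed excessive gap condition.) Suppose β₂ > 0, x̄ ∈ X, ȳ ∈ ℝ^m, the condition f(x̄; β₂) ≤ d(ȳ) holds, and y* is a maximizer of the dual function d over ℝ^m. Then −2β₂‖y*‖² ≤ −‖y*‖·‖A x̄ − b‖ ≤ φ(x̄) − d(ȳ) ≤ 0 and ‖A x̄ − b‖ ≤ 2β₂‖y*‖. -/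
open scoped RealInnerProductSpace

theorem stmt_17 {m n₁ n₂ : ℕ} (hm : 0 < m) (hn₁ : 0 < n₁) (hn₂ : 0 < n₂)
    (X1 : Set (EuclideanSpace ℝ (Fin n₁))) (X2 : Set (EuclideanSpace ℝ (Fin n₂)))
    (hX1ne : X1.Nonempty) (hX1cp : IsCompact X1) (hX1cv : Convex ℝ X1)
    (hX2ne : X2.Nonempty) (hX2cp : IsCompact X2) (hX2cv : Convex ℝ X2)
    (φ₁ : EuclideanSpace ℝ (Fin n₁) → ℝ) (φ₂ : EuclideanSpace ℝ (Fin n₂) → ℝ)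
    (hφ₁c : Continuous φ₁) (hφ₁cv : ConvexOn ℝ Set.univ φ₁)
    (hφ₂c : Continuous φ₂) (hφ₂cv : ConvexOn ℝ Set.univ φ₂)
    (A₁ : EuclideanSpace ℝ (Fin n₁) →L[ℝ] EuclideanSpace ℝ (Fin m))
    (A₂ : EuclideanSpace ℝ (Fin n₂) →L[ℝ] EuclideanSpace ℝ (Fin m))
    (b : EuclideanSpace ℝ (Fin m))
    (d : EuclideanSpace ℝ (Fin m) → ℝ)
    (hd : ∀ y, IsLeast
      ((fun x : EuclideanSpace ℝ (Fin n₁) × EuclideanSpace ℝ (Fin n₂) =>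
        φ₁ x.1 + φ₂ x.2 + ⟪A₁ x.1 + A₂ x.2 - b, y⟫) '' (X1 ×ˢ X2)) (d y))
    (β₂ : ℝ) (hβ₂ : 0 < β₂)
    (xb : EuclideanSpace ℝ (Fin n₁) × EuclideanSpace ℝ (Fin n₂))
    (hxb : xb ∈ X1 ×ˢ X2)
    (yb : EuclideanSpace ℝ (Fin m))
    (hgap : φ₁ xb.1 + φ₂ xb.2 + ‖A₁ xb.1 + A₂ xb.2 - b‖ ^ 2 / (2 * β₂) ≤ d yb)
    (ys : EuclideanSpace ℝ (Fin m)) (hys : ∀ y, d y ≤ d ys) :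
    -(2 * β₂ * ‖ys‖ ^ 2) ≤ -(‖ys‖ * ‖A₁ xb.1 + A₂ xb.2 - b‖) ∧
    -(‖ys‖ * ‖A₁ xb.1 + A₂ xb.2 - b‖) ≤ φ₁ xb.1 + φ₂ xb.2 - d yb ∧
    φ₁ xb.1 + φ₂ xb.2 - d yb ≤ 0 ∧
    ‖A₁ xb.1 + A₂ xb.2 - b‖ ≤ 2 * β₂ * ‖ys‖ := by
  have hds : d ys ≤ φ₁ xb.1 + φ₂ xb.2 + ⟪A₁ xb.1 + A₂ xb.2 - b, ys⟫ := (hd ys).2 ⟨xb, hxb, rfl⟩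
  have hcs : (⟪A₁ xb.1 + A₂ xb.2 - b, ys⟫ : ℝ) ≤ ‖A₁ xb.1 + A₂ xb.2 - b‖ * ‖ys‖ :=
    real_inner_le_norm _ ys
  have hby := hys yb
  have h2 : -(‖ys‖ * ‖A₁ xb.1 + A₂ xb.2 - b‖) ≤ φ₁ xb.1 + φ₂ xb.2 - d yb := by
    rw [mul_comm]; linarith
  have hrn : (0:ℝ) ≤ ‖A₁ xb.1 + A₂ xb.2 - b‖ := norm_nonneg _
  have h3 : φ₁ xb.1 + φ₂ xb.2 - d yb ≤ -(‖A₁ xb.1 + A₂ xb.2 - b‖ ^ 2 / (2 * β₂)) := by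
    linarith
  have h30 : φ₁ xb.1 + φ₂ xb.2 - d yb ≤ 0 := by
    have : (0:ℝ) ≤ ‖A₁ xb.1 + A₂ xb.2 - b‖ ^ 2 / (2 * β₂) := by positivity
    linarith
  have h4 : ‖A₁ xb.1 + A₂ xb.2 - b‖ ≤ 2 * β₂ * ‖ys‖ := by
    rcases eq_or_lt_of_le hrn with h | h
    · nlinarith [norm_nonneg ys]
    · have key : ‖A₁ xb.1 + A₂ xb.2 - b‖ ^ 2 / (2 * β₂) ≤ ‖ys‖ * ‖A₁ xb.1 + A₂ xb.2 - b‖ := by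
        linarith
      have : ‖A₁ xb.1 + A₂ xb.2 - b‖ ^ 2 ≤ 2 * β₂ * (‖ys‖ * ‖A₁ xb.1 + A₂ xb.2 - b‖) := by
        rw [div_le_iff₀ (by positivity)] at key; linarith
      nlinarith
  have h1 : -(2 * β₂ * ‖ys‖ ^ 2) ≤ -(‖ys‖ * ‖A₁ xb.1 + A₂ xb.2 - b‖) := by
    nlinarith [norm_nonneg ys]
  exact ⟨h1, h2, h30, h4⟩
end
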